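/- Let f, g ∈ ℝ^n and φ ∈ ℝ^n, and set η := (f − φ, g). Then the vector z := ((e^{φ/ε} − 1) ⊙ φ, 0) ∈ ℝ^n × ℝ^m (where e^{φ/ε} − 1 is taken componentwise and ⊙ is the componentwise product) satisfies the linear system J_F(f,g) z = [J_F(f − φ, g) − J_F(f,g)] (φ, 0). -/

import Mathlib

open Matrix

/-- With `η := (f − φ, g)`, the vector `z := ((e^{φ/ε} − 1) ⊙ φ, 0)` solves the
linear system `J_F(f,g) z = [J_F(f − φ, g) − J_F(f,g)] (φ, 0)`. -/
theorem explicit_newton_correction (n m : ℕ) (C : Matrix (Fin n) (Fin m) ℝ)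
    (ε : ℝ) (hε : 0 < ε) (f : Fin n → ℝ) (g : Fin m → ℝ) (φ : Fin n → ℝ) :
    let Jm : (Fin n → ℝ) → (Fin m → ℝ) → Matrix (Fin n ⊕ Fin m) (Fin n ⊕ Fin m) ℝ :=
      fun u v =>
        let P : Matrix (Fin n) (Fin m) ℝ :=
          fun i j => Real.exp (-u i / ε) * Real.exp (-C i j / ε) * Real.exp (-v j / ε)
        (1 / ε) • Matrix.fromBlocks (Matrix.diagonal (P *ᵥ 1)) P
          Pᵀ (Matrix.diagonal (Pᵀ *ᵥ 1))
    let z : Fin n ⊕ Fin m → ℝ :=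
      Sum.elim (fun i => (Real.exp (φ i / ε) - 1) * φ i) (fun _ => (0 : ℝ))
    Jm f g *ᵥ z = (Jm (f - φ) g - Jm f g) *ᵥ Sum.elim φ (fun _ => (0 : ℝ)) := by
  intro Jm z
  have key : ∀ i, Real.exp (-(f i - φ i) / ε) = Real.exp (φ i / ε) * Real.exp (-f i / ε) := by
    intro i; rw [← Real.exp_add]; ring_nf
  funext x
  cases x with
  | inl i =>
    simp only [Jm, z, Matrix.mulVec, dotProduct, Matrix.smul_apply, Matrix.sub_apply,
      Matrix.fromBlocks, Matrix.of_apply, Sum.elim_inl, Sum.elim_inr,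
      Fintype.sum_sum_type, Matrix.diagonal_apply, Pi.sub_apply, smul_eq_mul,
      Matrix.transpose_apply, Pi.one_apply, mul_zero, mul_one, Finset.sum_const_zero, add_zero,
      ite_mul, zero_mul, mul_ite, sub_mul, Finset.sum_sub_distrib,
      Finset.sum_ite_eq, Finset.mem_univ, if_true, key]
    simp only [Finset.mul_sum, Finset.sum_mul, ← Finset.sum_sub_distrib]
    apply Finset.sum_congr rfl
    intro j _; ring
  | inr j =>
    simp only [Jm, z, Matrix.mulVec, dotProduct, Matrix.smul_apply, Matrix.sub_apply,
      Matrix.fromBlocks, Matrix.of_apply, Sum.elim_inl, Sum.elim_inr,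
      Fintype.sum_sum_type, Matrix.diagonal_apply, Pi.sub_apply, smul_eq_mul,
      Matrix.transpose_apply, Pi.one_apply, mul_zero, mul_one, Finset.sum_const_zero, add_zero,
      ite_mul, zero_mul, mul_ite, sub_mul, Finset.sum_sub_distrib,
      Finset.sum_ite_eq, Finset.mem_univ, if_true, key]
    rw [← Finset.sum_sub_distrib]
    apply Finset.sum_congr rfl
    intro i _; simp only [Matrix.transpose, Matrix.of_apply]; ring
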